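/- arXiv:1607.04619 — 3 statements merged into one kernel-verified Lean document; each statement's English description precedes it below -/
import Mathlib

section
/- Let X and Y be real Banach spaces, let F : X → Y be Fréchet differentiable at every point with derivative F'(x) ∈ B(X,Y) at x, and let û ∈ X. Suppose there exist constants δ ≥ 0, K > 0 and a function g : [0,∞) → [0,∞) such that: (i) ‖F(û)‖_Y ≤ δ; (ii) F'(û) : X → Y is bijective and ‖u‖_X ≤ K‖F'(û)u‖_Y for all u ∈ X; (iii) ‖F'(û+u) − F'(û)‖_{B(X,Y)} ≤ g(‖u‖_X) for all u ∈ X; (iv) g is nondecreasing and g(t) → 0 as t → 0⁺. If moreover there exists α > 0 with δ ≤ α/K − G(α) and K·g(α) < 1, where G(t) := ∫₀ᵗ g(s) ds, then there exists a solution u ∈ X of F(u) = 0 with ‖u − û‖_X ≤ α, and this solution is unique among all u with ‖u − û‖_X ≤ α. -/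
open Filter Topology MeasureTheory intervalIntegral

/-- Plum's verification theorem: existence and local uniqueness of a zero of a
Fréchet differentiable map between Banach spaces near an approximate solution. -/
theorem stmt_0
    {X Y : Type*} [NormedAddCommGroup X] [NormedSpace ℝ X] [CompleteSpace X]
    [NormedAddCommGroup Y] [NormedSpace ℝ Y] [CompleteSpace Y]
    (F : X → Y) (F' : X → X →L[ℝ] Y)
    (hF : ∀ x : X, HasFDerivAt F (F' x) x)
    (uhat : X) (δ K : ℝ) (g : ℝ → ℝ)
    (hδ : 0 ≤ δ) (hK : 0 < K)
    (hg_nonneg : ∀ t : ℝ, 0 ≤ t → 0 ≤ g t)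
    (hg_mono : ∀ s t : ℝ, 0 ≤ s → s ≤ t → g s ≤ g t)
    (hg_lim : Tendsto g (𝓝[>] (0:ℝ)) (𝓝 0))
    (hres : ‖F uhat‖ ≤ δ)
    (hbij : Function.Bijective (F' uhat))
    (hinv : ∀ u : X, ‖u‖ ≤ K * ‖(F' uhat) u‖)
    (hlip : ∀ u : X, ‖F' (uhat + u) - F' uhat‖ ≤ g ‖u‖)
    (α : ℝ) (hα : 0 < α)
    (h1 : δ ≤ α / K - ∫ s in (0:ℝ)..α, g s)
    (h2 : K * g α < 1) :
    ∃! u : X, F u = 0 ∧ ‖u - uhat‖ ≤ α := by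
  classical
  have hker : (F' uhat).ker = ⊥ := LinearMap.ker_eq_bot.2 hbij.1
  have hrange : (F' uhat).range = ⊤ := LinearMap.range_eq_top.2 hbij.2
  set e : X ≃L[ℝ] Y := ContinuousLinearEquiv.ofBijective (F' uhat) hker hrange with he
  have hea : ∀ v : X, e v = F' uhat v := fun v => rfl
  have hsymmL : ∀ v : X, e.symm (F' uhat v) = v := fun v => by
    rw [← hea]; exact e.symm_apply_apply v
  have hesymm : ∀ y : Y, ‖e.symm y‖ ≤ K * ‖y‖ := by
    intro y
    have h0 : F' uhat (e.symm y) = y := by rw [← hea]; exact e.apply_symm_apply y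
    have := hinv (e.symm y)
    rwa [h0] at this
  set Φ : X → X := fun u => u - e.symm (F (uhat + u)) with hΦ
  set Φ' : X → X →L[ℝ] X :=
    fun u => ContinuousLinearMap.id ℝ X - (e.symm : Y →L[ℝ] X).comp (F' (uhat + u)) with hΦ'
  -- differentiability of Φ
  have hΦd : ∀ u : X, HasFDerivAt Φ (Φ' u) u := by
    intro u
    have h1' : HasFDerivAt (fun v : X => F (uhat + v)) (F' (uhat + u)) u := by
      have := (hF (uhat + u)).comp u ((hasFDerivAt_id u).const_add uhat)
      exact this
    have h2' : HasFDerivAt (fun v : X => e.symm (F (uhat + v)))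
        ((e.symm : Y →L[ℝ] X).comp (F' (uhat + u))) u :=
      ((e.symm : Y →L[ℝ] X).hasFDerivAt).comp u h1'
    exact (hasFDerivAt_id u).sub h2'
  -- norm bound on Φ'
  have hΦ'norm : ∀ u : X, ‖Φ' u‖ ≤ K * g ‖u‖ := by
    intro u
    have hg0 : 0 ≤ g ‖u‖ := hg_nonneg _ (norm_nonneg u)
    refine ContinuousLinearMap.opNorm_le_bound _ (by positivity) fun w => ?_
    have heq : (Φ' u) w = e.symm ((F' uhat - F' (uhat + u)) w) := by
      simp only [hΦ', ContinuousLinearMap.sub_apply, ContinuousLinearMap.id_apply,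
        ContinuousLinearMap.coe_comp', Function.comp_apply, map_sub, hsymmL]
      rfl
    rw [heq]
    calc ‖e.symm ((F' uhat - F' (uhat + u)) w)‖ ≤ K * ‖(F' uhat - F' (uhat + u)) w‖ := hesymm _
      _ ≤ K * (g ‖u‖ * ‖w‖) := by
          refine mul_le_mul_of_nonneg_left ?_ hK.le
          calc ‖(F' uhat - F' (uhat + u)) w‖ ≤ ‖F' uhat - F' (uhat + u)‖ * ‖w‖ :=
              ContinuousLinearMap.le_opNorm _ _
            _ ≤ g ‖u‖ * ‖w‖ := by
                refine mul_le_mul_of_nonneg_right ?_ (norm_nonneg w)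
                rw [norm_sub_rev]; exact hlip u
      _ = K * g ‖u‖ * ‖w‖ := by ring
  -- Lipschitz estimate on balls
  have lipOn : ∀ r : ℝ, 0 ≤ r → ∀ x ∈ Metric.closedBall (0:X) r,
      ∀ y ∈ Metric.closedBall (0:X) r, ‖Φ x - Φ y‖ ≤ K * g r * ‖x - y‖ := by
    intro r hr x hx y hy
    refine (convex_closedBall (0:X) r).norm_image_sub_le_of_norm_hasFDerivWithin_le
      (fun z _ => (hΦd z).hasFDerivWithinAt) (fun z hz => ?_) hy hx
    have hzr : ‖z‖ ≤ r := by simpa [dist_zero_right] using hz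
    calc ‖Φ' z‖ ≤ K * g ‖z‖ := hΦ'norm z
      _ ≤ K * g r := mul_le_mul_of_nonneg_left (hg_mono _ _ (norm_nonneg z) hzr) hK.le
  -- integrability of g
  have hg_int : ∀ a b : ℝ, 0 ≤ a → a ≤ b → IntervalIntegrable g volume a b := by
    intro a b ha hab
    apply MonotoneOn.intervalIntegrable
    intro s hs t ht hst
    rw [Set.uIcc_of_le hab] at hs
    exact hg_mono s t (le_trans ha hs.1) hst
  -- bound at 0
  have hΦ0 : ‖Φ 0‖ ≤ K * δ := by
    have h0 : Φ 0 = - e.symm (F uhat) := by simp [hΦ]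
    rw [h0, norm_neg]
    calc ‖e.symm (F uhat)‖ ≤ K * ‖F uhat‖ := hesymm _
      _ ≤ K * δ := mul_le_mul_of_nonneg_left hres hK.le
  -- key integral estimate along the ray
  have key : ∀ u : X, ‖Φ u - Φ 0‖ ≤ K * ∫ s in (0:ℝ)..‖u‖, g s := by
    intro u
    set r := ‖u‖ with hrdef
    have hr0 : 0 ≤ r := norm_nonneg u
    have step : ∀ n : ℕ, 0 < n →
        ‖Φ u - Φ 0‖ ≤ K * (∫ s in (0:ℝ)..r, g s) + K * (g r * r) / n := by
      intro n hn
      have hnR : (0:ℝ) < n := Nat.cast_pos.2 hn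
      set a : ℕ → ℝ := fun i => (i : ℝ) * r / n with ha
      have ha0 : a 0 = 0 := by simp [ha]
      have han : a n = r := by simp only [ha]; exact mul_div_cancel_left₀ r hnR.ne'
      have hale : ∀ i : ℕ, a i ≤ a (i+1) := by
        intro i
        have : (i:ℝ) ≤ (i:ℝ) + 1 := by linarith
        simp only [ha]
        gcongr
        push_cast; linarith
      have hapos : ∀ i : ℕ, 0 ≤ a i := by
        intro i; simp only [ha]; positivity
      have hadiff : ∀ i : ℕ, a (i+1) - a i = r / n := by
        intro i; simp only [ha]; push_cast; field_simp; ring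
      set x : ℕ → X := fun i => ((i : ℝ)/n) • u with hx
      have hxnorm : ∀ i : ℕ, ‖x i‖ = a i := by
        intro i
        simp only [hx, norm_smul, Real.norm_eq_abs,
          abs_of_nonneg (by positivity : (0:ℝ) ≤ (i:ℝ)/n)]
        simp only [ha]; rw [← hrdef]; ring
      have hxdiff : ∀ i : ℕ, x (i+1) - x i = ((1:ℝ)/n) • u := by
        intro i
        simp only [hx]
        rw [← sub_smul]
        congr 1
        push_cast
        field_simp
        ring
      have hterm : ∀ i ∈ Finset.range n,
          ‖Φ (x (i+1)) - Φ (x i)‖ ≤ K * g (a (i+1)) * (r/n) := by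
        intro i _
        have hri0 : 0 ≤ a (i+1) := hapos (i+1)
        have h1' : x (i+1) ∈ Metric.closedBall (0:X) (a (i+1)) := by
          rw [Metric.mem_closedBall, dist_zero_right, hxnorm]
        have h2' : x i ∈ Metric.closedBall (0:X) (a (i+1)) := by
          rw [Metric.mem_closedBall, dist_zero_right, hxnorm]; exact hale i
        have := lipOn _ hri0 _ h1' _ h2'
        have hnd : ‖x (i+1) - x i‖ = r / n := by
          rw [hxdiff, norm_smul, Real.norm_eq_abs,
            abs_of_nonneg (by positivity : (0:ℝ) ≤ (1:ℝ)/n), ← hrdef]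
          ring
        rw [hnd] at this
        exact this
      have tele : Φ u - Φ 0 = ∑ i ∈ Finset.range n, (Φ (x (i+1)) - Φ (x i)) := by
        rw [Finset.sum_range_sub (fun i => Φ (x i))]
        have hxn : x n = u := by
          simp only [hx]; rw [div_self hnR.ne']; simp
        have hx0 : x 0 = 0 := by simp [hx]
        rw [hxn, hx0]
      have hint : ∀ k : ℕ, k < n → IntervalIntegrable g volume (a k) (a (k+1)) :=
        fun k _ => hg_int _ _ (hapos k) (hale k)
      have hlow : ∀ i ∈ Finset.range n, g (a i) * (r/n) ≤ ∫ s in a i..a (i+1), g s := by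
        intro i hi
        have hc : (∫ _ in a i..a (i+1), g (a i)) = g (a i) * (r/n) := by
          rw [intervalIntegral.integral_const, hadiff, smul_eq_mul, mul_comm]
        rw [← hc]
        refine intervalIntegral.integral_mono_on (hale i) intervalIntegrable_const
          (hint i (Finset.mem_range.1 hi)) (fun s hs => ?_)
        exact hg_mono _ _ (hapos i) hs.1
      have hsum2 : ∑ i ∈ Finset.range n, g (a i) * (r/n) ≤ ∫ s in (0:ℝ)..r, g s := by
        have := intervalIntegral.sum_integral_adjacent_intervals (μ := volume) (f := g) hint
        rw [ha0, han] at this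
        calc ∑ i ∈ Finset.range n, g (a i) * (r/n)
            ≤ ∑ i ∈ Finset.range n, ∫ s in a i..a (i+1), g s := Finset.sum_le_sum hlow
          _ = ∫ s in (0:ℝ)..r, g s := this
      have hshift : ∑ i ∈ Finset.range n, g (a (i+1)) * (r/n)
          = ∑ i ∈ Finset.range n, g (a i) * (r/n) + (g r - g 0) * (r/n) := by
        have h1' := Finset.sum_range_succ' (fun i => g (a i) * (r/n)) n
        have h2' := Finset.sum_range_succ (fun i => g (a i) * (r/n)) n
        simp only [ha0, han] at h1' h2'
        have hrr : (g r - g 0) * (r/(n:ℝ)) = g r * (r/n) - g 0 * (r/n) := by ring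
        rw [hrr]
        linarith
      calc ‖Φ u - Φ 0‖ ≤ ∑ i ∈ Finset.range n, ‖Φ (x (i+1)) - Φ (x i)‖ := by
            rw [tele]; exact norm_sum_le _ _
        _ ≤ ∑ i ∈ Finset.range n, K * g (a (i+1)) * (r/n) := Finset.sum_le_sum hterm
        _ = K * ∑ i ∈ Finset.range n, g (a (i+1)) * (r/n) := by
            rw [Finset.mul_sum]; exact Finset.sum_congr rfl fun i _ => by ring
        _ ≤ K * ((∫ s in (0:ℝ)..r, g s) + (g r - g 0) * (r/n)) := by
            refine mul_le_mul_of_nonneg_left ?_ hK.le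
            rw [hshift]; linarith
        _ ≤ K * (∫ s in (0:ℝ)..r, g s) + K * (g r * r) / n := by
            have hg00 : 0 ≤ g 0 := hg_nonneg 0 le_rfl
            have h01 : (g r - g 0) * (r/n) ≤ g r * r / n := by
              have : 0 ≤ r / n := by positivity
              have hgr : g r - g 0 ≤ g r := by linarith
              calc (g r - g 0) * (r/n) ≤ g r * (r/n) :=
                  mul_le_mul_of_nonneg_right hgr this
                _ = g r * r / n := by ring
            have := mul_le_mul_of_nonneg_left h01 hK.le
            calc K * ((∫ s in (0:ℝ)..r, g s) + (g r - g 0) * (r/n))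
                = K * (∫ s in (0:ℝ)..r, g s) + K * ((g r - g 0) * (r/n)) := by ring
              _ ≤ K * (∫ s in (0:ℝ)..r, g s) + K * (g r * r / n) := by linarith
              _ = K * (∫ s in (0:ℝ)..r, g s) + K * (g r * r) / n := by ring
    have hlim : Tendsto (fun n : ℕ => K * (∫ s in (0:ℝ)..r, g s) + K * (g r * r) / n)
        atTop (𝓝 (K * (∫ s in (0:ℝ)..r, g s))) := by
      have h0 : Tendsto (fun n : ℕ => K * (g r * r) / n) atTop (𝓝 0) :=
        tendsto_const_div_atTop_nhds_zero_nat _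
      simpa using tendsto_const_nhds.add h0
    refine ge_of_tendsto hlim ?_
    filter_upwards [Filter.eventually_ge_atTop 1] with n hn
    exact step n hn
  -- self-map
  have hmaps : Set.MapsTo Φ (Metric.closedBall (0:X) α) (Metric.closedBall (0:X) α) := by
    intro u hu
    have hu' : ‖u‖ ≤ α := by simpa [dist_zero_right] using hu
    have h3 : (∫ s in (0:ℝ)..‖u‖, g s) ≤ ∫ s in (0:ℝ)..α, g s := by
      have hadd := intervalIntegral.integral_add_adjacent_intervals
        (hg_int 0 ‖u‖ le_rfl (norm_nonneg u)) (hg_int ‖u‖ α (norm_nonneg u) hu')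
      have hpos : 0 ≤ ∫ s in ‖u‖..α, g s :=
        intervalIntegral.integral_nonneg hu' (fun s hs => hg_nonneg s (le_trans (norm_nonneg u) hs.1))
      linarith
    have hb : ‖Φ u‖ ≤ K * (∫ s in (0:ℝ)..α, g s) + K * δ := by
      calc ‖Φ u‖ = ‖(Φ u - Φ 0) + Φ 0‖ := by rw [sub_add_cancel]
        _ ≤ ‖Φ u - Φ 0‖ + ‖Φ 0‖ := norm_add_le _ _
        _ ≤ K * (∫ s in (0:ℝ)..‖u‖, g s) + K * δ := add_le_add (key u) hΦ0
        _ ≤ K * (∫ s in (0:ℝ)..α, g s) + K * δ :=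
            add_le_add_left (mul_le_mul_of_nonneg_left h3 hK.le) _
    have hfin : K * (∫ s in (0:ℝ)..α, g s) + K * δ ≤ α := by
      have := mul_le_mul_of_nonneg_left h1 hK.le
      rw [mul_sub, mul_div_cancel₀ _ hK.ne'] at this
      linarith
    rw [Metric.mem_closedBall, dist_zero_right]
    linarith
  -- contraction
  have hgα0 : 0 ≤ K * g α := mul_nonneg hK.le (hg_nonneg α hα.le)
  set c : NNReal := ⟨K * g α, hgα0⟩ with hc
  have hclt : c < 1 := by
    rw [← NNReal.coe_lt_coe]
    exact h2
  have hlips : LipschitzOnWith c Φ (Metric.closedBall (0:X) α) := by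
    rw [lipschitzOnWith_iff_dist_le_mul]
    intro x hx y hy
    rw [dist_eq_norm, dist_eq_norm]
    exact lipOn α hα.le x hx y hy
  have hcomplete : IsComplete (Metric.closedBall (0:X) α) :=
    Metric.isClosed_closedBall.isComplete
  have hcontr : ContractingWith c (hmaps.restrict Φ _ _) := ⟨hclt, hlips.to_restrict⟩
  have h0mem : (0:X) ∈ Metric.closedBall (0:X) α := Metric.mem_closedBall_self hα.le
  have hne : edist (0:X) (Φ 0) ≠ ⊤ := edist_ne_top _ _
  set z := ContractingWith.efixedPoint' Φ hcomplete hmaps hcontr 0 h0mem hne with hz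
  have hzmem : z ∈ Metric.closedBall (0:X) α :=
    ContractingWith.efixedPoint_mem' hcomplete hmaps hcontr h0mem hne
  have hzfix : Φ z = z :=
    ContractingWith.efixedPoint_isFixedPt' hcomplete hmaps hcontr h0mem hne
  have hznorm : ‖z‖ ≤ α := by simpa [dist_zero_right] using hzmem
  have hFz : F (uhat + z) = 0 := by
    have h0 : e.symm (F (uhat + z)) = 0 := by
      have := hzfix
      simp only [hΦ] at this
      have := sub_eq_self.1 this
      exact this
    have := congrArg e h0
    rwa [e.apply_symm_apply, map_zero] at this
  -- uniqueness helper
  have huniq : ∀ v ∈ Metric.closedBall (0:X) α, Φ v = v → v = z := by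
    intro v hv hvfix
    have hd := lipOn α hα.le v hv z hzmem
    rw [hvfix, hzfix] at hd
    have hnn : 0 ≤ ‖v - z‖ := norm_nonneg _
    have : ‖v - z‖ = 0 := by nlinarith
    exact sub_eq_zero.1 (norm_eq_zero.1 this)
  refine ⟨uhat + z, ⟨hFz, by simpa using hznorm⟩, ?_⟩
  rintro u' ⟨hu'0, hu'n⟩
  have hvmem : u' - uhat ∈ Metric.closedBall (0:X) α := by
    rw [Metric.mem_closedBall, dist_zero_right]; exact hu'n
  have hvfix : Φ (u' - uhat) = u' - uhat := by
    simp only [hΦ]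
    rw [add_sub_cancel, hu'0, map_zero, sub_zero]
  have := huniq _ hvmem hvfix
  have : u' - uhat = z := this
  rw [← this]
  abel
end

section
/- Let H be a real Hilbert space and let N : H → H be a compact self-adjoint bounded linear operator; set A := I − N, where I is the identity operator. Suppose μ₀ > 0 satisfies μ₀ ≤ 1 and μ₀ ≤ |μ| for every eigenvalue μ of A. Then A is bijective and μ₀‖u‖ ≤ ‖Au‖ for all u ∈ H; in particular A has a bounded inverse A⁻¹ : H → H with operator norm ‖A⁻¹‖ ≤ μ₀⁻¹. -/
open RealInnerProductSpace

section Aux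

variable {H : Type*} [NormedAddCommGroup H] [InnerProductSpace ℝ H]

/-- Cauchy–Schwarz for the semi-inner-product associated to a positive symmetric operator. -/
lemma pos_op_cs (T : H →L[ℝ] H) (hsym : ∀ u v : H, ⟪T u, v⟫ = ⟪u, T v⟫)
    (hpos : ∀ u : H, 0 ≤ ⟪T u, u⟫) (u v : H) :
    ⟪T u, v⟫ ^ 2 ≤ ⟪T u, u⟫ * ⟪T v, v⟫ := by
  have key : ∀ x : ℝ, 0 ≤ ⟪T v, v⟫ * (x * x) + (2 * ⟪T u, v⟫) * x + ⟪T u, u⟫ := by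
    intro x
    have h := hpos (u + x • v)
    have expand : ⟪T (u + x • v), u + x • v⟫ =
        ⟪T v, v⟫ * (x * x) + (2 * ⟪T u, v⟫) * x + ⟪T u, u⟫ := by
      rw [map_add, map_smul]
      simp only [inner_add_left, inner_add_right, real_inner_smul_left, real_inner_smul_right]
      have h1 : ⟪T v, u⟫ = ⟪T u, v⟫ := by
        rw [hsym v u, real_inner_comm]
      rw [h1]
      ring
    linarith [expand ▸ h]
  have hd := discrim_le_zero key
  rw [discrim] at hd
  nlinarith [hd]

/-- For a positive symmetric operator, `‖T u‖ ^ 2 ≤ ‖T‖ * ⟪T u, u⟫`. -/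
lemma pos_op_norm_sq_le (T : H →L[ℝ] H) (hsym : ∀ u v : H, ⟪T u, v⟫ = ⟪u, T v⟫)
    (hpos : ∀ u : H, 0 ≤ ⟪T u, u⟫) (u : H) :
    ‖T u‖ ^ 2 ≤ ‖T‖ * ⟪T u, u⟫ := by
  have hcs := pos_op_cs T hsym hpos u (T u)
  have h1 : ⟪T u, T u⟫ = ‖T u‖ ^ 2 := real_inner_self_eq_norm_sq (T u)
  rw [h1] at hcs
  have h2 : ⟪T (T u), T u⟫ ≤ ‖T‖ * ‖T u‖ ^ 2 := by
    calc ⟪T (T u), T u⟫ ≤ ‖T (T u)‖ * ‖T u‖ := real_inner_le_norm _ _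
      _ ≤ (‖T‖ * ‖T u‖) * ‖T u‖ := by
          have := T.le_opNorm (T u)
          nlinarith [norm_nonneg (T u)]
      _ = ‖T‖ * ‖T u‖ ^ 2 := by ring
  rcases eq_or_lt_of_le (norm_nonneg (T u)) with h | h
  · nlinarith [hpos u, (T.opNorm_nonneg : (0:ℝ) ≤ ‖T‖), h]
  · nlinarith [hpos u, mul_le_mul_of_nonneg_left h2 (hpos u), pow_pos h 2]

end Aux

/-- If `N` is a compact self-adjoint operator on a real Hilbert space, `A = I - N`,
and `0 < μ₀ ≤ 1` is a lower bound for `|μ|` over all eigenvalues `μ` of `A`, then `A`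
is bijective, `μ₀‖u‖ ≤ ‖Au‖` for all `u`, and `A` has a bounded inverse with norm `≤ μ₀⁻¹`. -/
theorem stmt_1 {H : Type*} [NormedAddCommGroup H] [InnerProductSpace ℝ H] [CompleteSpace H]
    (N : H →L[ℝ] H) (hcompact : IsCompactOperator N)
    (hsa : ∀ u v : H, ⟪N u, v⟫ = ⟪u, N v⟫)
    (A : H →L[ℝ] H) (hA : A = 1 - N)
    (μ₀ : ℝ) (hμ₀pos : 0 < μ₀) (hμ₀le : μ₀ ≤ 1)
    (heig : ∀ μ : ℝ, (∃ u : H, u ≠ 0 ∧ A u = μ • u) → μ₀ ≤ |μ|) :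
    Function.Bijective A ∧ (∀ u : H, μ₀ * ‖u‖ ≤ ‖A u‖) ∧
      ∃ B : H →L[ℝ] H, (∀ u : H, B (A u) = u) ∧ (∀ u : H, A (B u) = u) ∧ ‖B‖ ≤ μ₀⁻¹ := by
  -- A is symmetric
  have hAsym : ∀ u v : H, ⟪A u, v⟫ = ⟪u, A v⟫ := by
    intro u v
    rw [hA]
    simp only [ContinuousLinearMap.sub_apply, ContinuousLinearMap.one_apply,
      inner_sub_left, inner_sub_right, hsa u v]
  -- the key quantitative estimate
  have key : ∀ u : H, μ₀ * ‖u‖ ≤ ‖A u‖ := by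
    by_contra hcon
    push_neg at hcon
    obtain ⟨u₀, hu₀⟩ := hcon
    have hu₀ne : u₀ ≠ 0 := by
      rintro rfl
      simp at hu₀
    have hu₀pos : 0 < ‖u₀‖ := norm_pos_iff.mpr hu₀ne
    set s : Set ℝ := (fun u : H => ‖A u‖) '' {u : H | ‖u‖ = 1} with hs
    have hne : s.Nonempty := by
      refine ⟨‖A (‖u₀‖⁻¹ • u₀)‖, ⟨‖u₀‖⁻¹ • u₀, ?_, rfl⟩⟩
      simp [norm_smul, abs_of_nonneg (inv_nonneg.mpr hu₀pos.le), inv_mul_cancel₀ hu₀pos.ne']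
    have hbdd : BddBelow s := ⟨0, by rintro r ⟨u, hu, rfl⟩; exact norm_nonneg _⟩
    set c : ℝ := sInf s with hc
    have hc0 : 0 ≤ c := le_csInf hne (by rintro r ⟨u, hu, rfl⟩; exact norm_nonneg _)
    have hclb : ∀ u : H, ‖u‖ = 1 → c ≤ ‖A u‖ := fun u hu => csInf_le hbdd ⟨u, hu, rfl⟩
    have hcle : ∀ u : H, c * ‖u‖ ≤ ‖A u‖ := by
      intro u
      rcases eq_or_ne u 0 with rfl | hu
      · simp
      · have hun : 0 < ‖u‖ := norm_pos_iff.mpr hu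
        have := hclb (‖u‖⁻¹ • u) (by
          simp [norm_smul, abs_of_nonneg (inv_nonneg.mpr hun.le), inv_mul_cancel₀ hun.ne'])
        rw [map_smul, norm_smul] at this
        simp only [norm_inv, norm_norm] at this
        rw [mul_comm c ‖u‖]
        calc ‖u‖ * c ≤ ‖u‖ * (‖u‖⁻¹ * ‖A u‖) := by
              exact mul_le_mul_of_nonneg_left this hun.le
          _ = ‖A u‖ := by field_simp
    have hclt : c < μ₀ := by
      have h1 : c * ‖u₀‖ ≤ ‖A u₀‖ := hcle u₀
      nlinarith
    have hc1 : c < 1 := lt_of_lt_of_le hclt hμ₀le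
    -- the positive operator T = A² - c²
    set T : H →L[ℝ] H := A * A - c ^ 2 • (1 : H →L[ℝ] H) with hTdef
    have hT_apply : ∀ u : H, T u = A (A u) - c ^ 2 • u := by
      intro u
      simp [hTdef, ContinuousLinearMap.sub_apply, ContinuousLinearMap.smul_apply,
        ContinuousLinearMap.mul_apply, ContinuousLinearMap.one_apply]
    have hInner : ∀ u : H, ⟪T u, u⟫ = ‖A u‖ ^ 2 - c ^ 2 * ‖u‖ ^ 2 := by
      intro u
      rw [hT_apply, inner_sub_left, real_inner_smul_left, hAsym (A u) u,
        real_inner_self_eq_norm_sq, real_inner_self_eq_norm_sq]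
    have hTsym : ∀ u v : H, ⟪T u, v⟫ = ⟪u, T v⟫ := by
      intro u v
      rw [hT_apply, hT_apply, inner_sub_left, inner_sub_right, real_inner_smul_left,
        real_inner_smul_right, hAsym (A u) v, hAsym u (A v)]
    have hTpos : ∀ u : H, 0 ≤ ⟪T u, u⟫ := by
      intro u
      rw [hInner]
      have h1 := hcle u
      have h2 := mul_self_le_mul_self (mul_nonneg hc0 (norm_nonneg u)) h1
      nlinarith [h2]
    -- minimizing sequence
    have hseq : ∀ n : ℕ, ∃ x : H, ‖x‖ = 1 ∧ ‖A x‖ < c + 1 / (n + 1) := by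
      intro n
      obtain ⟨r, ⟨x, hx, rfl⟩, hr⟩ := exists_lt_of_csInf_lt hne
        (lt_add_of_pos_right c (show (0:ℝ) < 1/(n+1) by positivity))
      exact ⟨x, hx, hr⟩
    choose u hu1 hu2 using hseq
    have hAnorm : Filter.Tendsto (fun n => ‖A (u n)‖) Filter.atTop (nhds c) := by
      apply tendsto_of_tendsto_of_tendsto_of_le_of_le (g := fun _ : ℕ => c)
        (h := fun n : ℕ => c + 1 / (n + 1)) tendsto_const_nhds
      · have := tendsto_one_div_add_atTop_nhds_zero_nat (𝕜 := ℝ)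
        simpa using tendsto_const_nhds.add this
      · intro n; exact hclb (u n) (hu1 n)
      · intro n; exact (hu2 n).le
    have hq : Filter.Tendsto (fun n => ⟪T (u n), u n⟫) Filter.atTop (nhds 0) := by
      have h2 : Filter.Tendsto (fun n => ‖A (u n)‖ ^ 2 - c ^ 2 * ‖u n‖ ^ 2)
          Filter.atTop (nhds (c ^ 2 - c ^ 2)) := by
        have ha := (hAnorm.pow 2).sub (tendsto_const_nhds (x := c ^ 2))
        simpa [hu1] using ha
      simpa [hInner, sub_self] using h2
    -- T (u n) → 0
    have hTnsq : Filter.Tendsto (fun n => ‖T (u n)‖ ^ 2) Filter.atTop (nhds 0) := by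
      apply tendsto_of_tendsto_of_tendsto_of_le_of_le (g := fun _ : ℕ => (0:ℝ))
        (h := fun n => ‖T‖ * ⟪T (u n), u n⟫) tendsto_const_nhds
      · simpa using tendsto_const_nhds.mul hq
      · intro n; positivity
      · intro n; exact pos_op_norm_sq_le T hTsym hTpos (u n)
    have hTn : Filter.Tendsto (fun n => T (u n)) Filter.atTop (nhds 0) := by
      rw [tendsto_zero_iff_norm_tendsto_zero]
      have := hTnsq.sqrt
      simpa [Real.sqrt_sq (norm_nonneg _)] using this
    -- the compact operator M with A² = 1 - M
    set M : H →L[ℝ] H := N + N - N * N with hMdef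
    have hMc : IsCompactOperator (M : H → H) := by
      have h1 : IsCompactOperator (fun x : H => N x + N x - N (N x)) :=
        (hcompact.add hcompact).sub (hcompact.comp_clm N)
      have : (M : H → H) = fun x : H => N x + N x - N (N x) := by
        funext x
        simp [hMdef, ContinuousLinearMap.sub_apply, ContinuousLinearMap.add_apply,
          ContinuousLinearMap.mul_apply]
      rwa [this]
    have hTM : ∀ v : H, T v = (1 - c ^ 2) • v - M v := by
      intro v
      have hAA : ∀ w : H, A (A w) = w - M w := by
        intro w
        rw [hA]
        simp only [ContinuousLinearMap.sub_apply, ContinuousLinearMap.one_apply, hMdef,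
          ContinuousLinearMap.add_apply, ContinuousLinearMap.mul_apply, map_sub]
        abel
      rw [hT_apply, hAA, sub_smul, one_smul]
      abel
    -- extract convergent subsequence of M (u n)
    obtain ⟨K, hK, hKsub⟩ :=
      hMc.image_subset_compact_of_bounded (σ₁₂ := RingHom.id ℝ) (f := M.toLinearMap)
        (Metric.isBounded_closedBall (x := (0:H)) (r := 1))
    have hmem : ∀ n, M (u n) ∈ K := by
      intro n
      exact hKsub ⟨u n, by simp [Metric.mem_closedBall, hu1 n], rfl⟩
    obtain ⟨w, hwK, φ, hφ, hconv⟩ := hK.tendsto_subseq hmem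
    have hS : (0:ℝ) < 1 - c ^ 2 := by nlinarith
    set v : H := (1 - c ^ 2)⁻¹ • w with hvdef
    have huconv : Filter.Tendsto (fun n => u (φ n)) Filter.atTop (nhds v) := by
      have heq : ∀ m : ℕ, u m = (1 - c ^ 2)⁻¹ • (T (u m) + M (u m)) := by
        intro m
        have := hTM (u m)
        have h2 : T (u m) + M (u m) = (1 - c ^ 2) • u m := by
          rw [this]; abel
        rw [h2, smul_smul, inv_mul_cancel₀ hS.ne', one_smul]
      have hlim : Filter.Tendsto (fun n => (1 - c ^ 2)⁻¹ • (T (u (φ n)) + M (u (φ n))))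
          Filter.atTop (nhds ((1 - c ^ 2)⁻¹ • ((0:H) + w))) := by
        exact ((hTn.comp hφ.tendsto_atTop).add hconv).const_smul _
      simp only [zero_add] at hlim
      rw [← hvdef] at hlim
      convert hlim using 1
      funext n
      exact heq (φ n)
    have hvnorm : ‖v‖ = 1 := by
      have h1 : Filter.Tendsto (fun n => ‖u (φ n)‖) Filter.atTop (nhds ‖v‖) := huconv.norm
      have h2 : Filter.Tendsto (fun n => ‖u (φ n)‖) Filter.atTop (nhds 1) := by
        simpa [hu1] using (tendsto_const_nhds : Filter.Tendsto (fun _ : ℕ => (1:ℝ)) _ _)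
      exact tendsto_nhds_unique h1 h2
    have hvne : v ≠ 0 := by
      intro h; rw [h] at hvnorm; simp at hvnorm
    have hTv : T v = 0 := by
      have h1 : Filter.Tendsto (fun n => T (u (φ n))) Filter.atTop (nhds (T v)) :=
        (T.continuous.tendsto v).comp huconv
      have h2 : Filter.Tendsto (fun n => T (u (φ n))) Filter.atTop (nhds 0) :=
        hTn.comp hφ.tendsto_atTop
      exact tendsto_nhds_unique h1 h2
    have hAAv : A (A v) = c ^ 2 • v := by
      have h := hT_apply v
      rw [hTv] at h
      have h2 : A (A v) - c ^ 2 • v = 0 := h.symm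
      rw [sub_eq_zero] at h2
      exact h2
    -- produce an eigenvalue of absolute value c, contradiction
    have hmu : μ₀ ≤ c := by
      by_cases hw : A v + c • v = 0
      · have hev : A v = (-c) • v := by
          rw [neg_smul, eq_neg_iff_add_eq_zero]
          exact hw
        have := heig (-c) ⟨v, hvne, hev⟩
        rwa [abs_neg, abs_of_nonneg hc0] at this
      · have hev : A (A v + c • v) = c • (A v + c • v) := by
          have h1 : A (A v + c • v) = c ^ 2 • v + c • A v := by
            rw [map_add, hAAv, A.map_smul]
          rw [h1]
          module
        have := heig c ⟨A v + c • v, hw, hev⟩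
        rwa [abs_of_nonneg hc0] at this
    exact absurd hclt (not_lt.mpr hmu)
  -- conclusions from the key estimate
  have hker : A.ker = ⊥ := by
    rw [LinearMap.ker_eq_bot']
    intro m hm
    have := key m
    rw [show A m = 0 from hm, norm_zero] at this
    have : ‖m‖ ≤ 0 := by nlinarith [norm_nonneg m]
    exact norm_le_zero_iff.mp this
  have hinj : Function.Injective A := by
    intro x y hxy
    have h0 : A (x - y) = 0 := by rw [map_sub, hxy, sub_self]
    have hxy' : x - y ∈ A.ker := h0
    rw [hker, Submodule.mem_bot] at hxy'
    exact sub_eq_zero.mp hxy'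
  -- range of A is closed
  have hanti : AntilipschitzWith (⟨μ₀⁻¹, (inv_pos.mpr hμ₀pos).le⟩ : NNReal) A := by
    apply ContinuousLinearMap.antilipschitz_of_bound
    intro x
    show ‖x‖ ≤ μ₀⁻¹ * ‖A x‖
    calc ‖x‖ ≤ μ₀⁻¹ * (μ₀ * ‖x‖) := by
          rw [← mul_assoc, inv_mul_cancel₀ hμ₀pos.ne', one_mul]
      _ ≤ μ₀⁻¹ * ‖A x‖ := by
          apply mul_le_mul_of_nonneg_left (key x) (inv_pos.mpr hμ₀pos).le
  have hclosed : IsClosed (Set.range (A : H → H)) :=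
    hanti.isClosed_range A.uniformContinuous
  have hrange : A.range = ⊤ := by
    have hclosed' : IsClosed ((A.range : Submodule ℝ H) : Set H) := by
      have : ((A.range : Submodule ℝ H) : Set H) = Set.range (A : H → H) := by
        ext x
        simp [LinearMap.mem_range]
      rw [this]
      exact hclosed
    haveI : CompleteSpace (A.range : Submodule ℝ H) :=
      hclosed'.completeSpace_coe
    rw [← Submodule.orthogonal_eq_bot_iff]
    rw [Submodule.eq_bot_iff]
    intro x hx
    have hAx : ∀ u : H, ⟪A u, x⟫ = 0 := by
      intro u
      exact (Submodule.mem_orthogonal _ x).mp hx (A u) (LinearMap.mem_range_self _ u)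
    have hAx0 : A x = 0 := by
      have h := hAx (A x)
      rw [hAsym (A x) x] at h
      exact inner_self_eq_zero.mp h
    have := key x
    rw [hAx0, norm_zero] at this
    have hx0 : ‖x‖ ≤ 0 := by nlinarith [norm_nonneg x]
    exact norm_le_zero_iff.mp hx0
  have hsurj : Function.Surjective A := by
    intro y
    have : y ∈ A.range := by rw [hrange]; trivial
    exact this
  refine ⟨⟨hinj, hsurj⟩, key, ?_⟩
  set e := ContinuousLinearEquiv.ofBijective A hker hrange with hedef
  refine ⟨e.symm.toContinuousLinearMap, ?_, ?_, ?_⟩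
  · intro u
    exact ContinuousLinearEquiv.ofBijective_symm_apply_apply A hker hrange u
  · intro u
    exact ContinuousLinearEquiv.ofBijective_apply_symm_apply A hker hrange u
  · apply ContinuousLinearMap.opNorm_le_bound _ (inv_nonneg.mpr hμ₀pos.le)
    intro u
    have h1 : A (e.symm u) = u :=
      ContinuousLinearEquiv.ofBijective_apply_symm_apply A hker hrange u
    have h2 := key (e.symm u)
    rw [h1] at h2
    rw [ContinuousLinearEquiv.coe_coe]
    calc ‖e.symm u‖ ≤ μ₀⁻¹ * (μ₀ * ‖e.symm u‖) := by
          rw [← mul_assoc, inv_mul_cancel₀ hμ₀pos.ne', one_mul]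
      _ ≤ μ₀⁻¹ * ‖u‖ := mul_le_mul_of_nonneg_left h2 (inv_nonneg.mpr hμ₀pos.le)
end

section
/- Let (Ω, μ) be a measure space, let 1 < p < 2 and set p' := 2(p−1). Let q, r be real numbers with q ≥ 2, r ≥ 1/(p−1) and 2/q + 1/r = 1. Let û, ω : Ω → ℝ be measurable with ω ∈ L^q(μ) ∩ L^{rp'}(μ) and û ∈ L^{rp'}(μ), and let ε > 0. Then ‖ |û+εω|^{p-1}(û+εω) − |û|^{p-1}û ‖_{L²(μ)} ≤ max(1, 2^{(p'−1)/2}) · p · ε · ‖ω‖_{L^q(μ)} · ( ‖û‖_{L^{rp'}(μ)}^{p'} + (ε^{p'}/(p'+1)) · ‖ω‖_{L^{rp'}(μ)}^{p'} )^{1/2}. -/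
open MeasureTheory

open scoped NNReal ENNReal

section aux_stmt_10
open Real Filter

lemma hasDerivAt_abs_rpow_mul {p : ℝ} (hp : 1 < p) (t : ℝ) :
    HasDerivAt (fun s : ℝ => |s| ^ (p - 1) * s) (p * |t| ^ (p - 1)) t := by
  have hp0 : (0:ℝ) < p - 1 := by linarith
  rcases lt_trichotomy t 0 with ht | rfl | ht
  · have h2 : HasDerivAt (fun s : ℝ => (-s) ^ p) (p * (-t) ^ (p - 1) * (-1)) t :=
      (Real.hasDerivAt_rpow_const (x := -t) (p := p)
        (Or.inl (neg_ne_zero.2 ht.ne))).comp t (hasDerivAt_neg t)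
    have h1 : HasDerivAt (fun s : ℝ => -((-s) ^ p)) (p * (-t) ^ (p - 1)) t := by
      have := h2.neg; simp only [mul_neg, mul_one, neg_neg] at this; exact this
    have hev : (fun s : ℝ => |s| ^ (p - 1) * s) =ᶠ[nhds t] fun s : ℝ => -((-s) ^ p) := by
      filter_upwards [Iio_mem_nhds ht] with s hs
      have hs' : (0:ℝ) < -s := by simpa using hs
      have : (-s) ^ p = (-s) ^ (p - 1) * (-s) := by
        rw [← Real.rpow_add_one hs'.ne' (p - 1), sub_add_cancel]
      rw [abs_of_neg hs, this]; ring
    have := h1.congr_of_eventuallyEq hev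
    rwa [abs_of_neg ht]
  · rw [abs_zero, Real.zero_rpow hp0.ne', mul_zero]
    rw [hasDerivAt_iff_tendsto_slope]
    have hcont : Filter.Tendsto (fun s : ℝ => |s| ^ (p - 1)) (nhds 0) (nhds 0) := by
      have : Filter.Tendsto (fun s : ℝ => |s| ^ (p - 1)) (nhds 0) (nhds (|0| ^ (p - 1))) :=
        (continuous_abs.rpow_const (fun _ => Or.inr hp0.le)).tendsto 0
      simpa [Real.zero_rpow hp0.ne'] using this
    refine Filter.Tendsto.congr' ?_ (hcont.mono_left nhdsWithin_le_nhds)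
    filter_upwards [self_mem_nhdsWithin] with s hs
    have hs' : s ≠ 0 := hs
    simp [slope_def_field, hs']
  · have h2 : HasDerivAt (fun s : ℝ => s ^ p) (p * t ^ (p - 1)) t :=
      Real.hasDerivAt_rpow_const (Or.inl ht.ne')
    have hev : (fun s : ℝ => |s| ^ (p - 1) * s) =ᶠ[nhds t] fun s : ℝ => s ^ p := by
      filter_upwards [Ioi_mem_nhds ht] with s hs
      have hs' : (0:ℝ) < s := hs
      rw [abs_of_pos hs', ← Real.rpow_add_one hs'.ne' (p - 1), sub_add_cancel]
    have := h2.congr_of_eventuallyEq hev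
    rwa [abs_of_pos ht]

lemma rpow_add_le_max {t : ℝ} (ht : 0 < t) {x y : ℝ} (hx : 0 ≤ x) (hy : 0 ≤ y) :
    (x + y) ^ t ≤ max 1 (2 ^ (t - 1)) * (x ^ t + y ^ t) := by
  rcases le_or_gt t 1 with h1 | h1
  · have := NNReal.rpow_add_le_add_rpow x.toNNReal y.toNNReal ht.le h1
    have hc : ((x.toNNReal + y.toNNReal : ℝ≥0) : ℝ) = x + y := by
      simp [Real.coe_toNNReal _ hx, Real.coe_toNNReal _ hy]
    calc (x + y) ^ t = ((x.toNNReal + y.toNNReal : ℝ≥0) : ℝ) ^ t := by rw [hc]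
      _ = (((x.toNNReal + y.toNNReal) ^ t : ℝ≥0) : ℝ) := by rw [NNReal.coe_rpow]
      _ ≤ ((x.toNNReal ^ t + y.toNNReal ^ t : ℝ≥0) : ℝ) := by exact_mod_cast this
      _ = x ^ t + y ^ t := by
          push_cast [NNReal.coe_rpow, Real.coe_toNNReal _ hx, Real.coe_toNNReal _ hy]; ring
      _ ≤ max 1 (2 ^ (t - 1)) * (x ^ t + y ^ t) := by
          apply le_mul_of_one_le_left (by positivity) (le_max_left _ _)
  · have := NNReal.rpow_add_le_mul_rpow_add_rpow x.toNNReal y.toNNReal h1.le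
    have hc : ((x.toNNReal + y.toNNReal : ℝ≥0) : ℝ) = x + y := by
      simp [Real.coe_toNNReal _ hx, Real.coe_toNNReal _ hy]
    calc (x + y) ^ t = (((x.toNNReal + y.toNNReal) ^ t : ℝ≥0) : ℝ) := by
          rw [NNReal.coe_rpow, hc]
      _ ≤ (((2:ℝ≥0) ^ (t - 1) * (x.toNNReal ^ t + y.toNNReal ^ t) : ℝ≥0) : ℝ) := by
          exact_mod_cast this
      _ = 2 ^ (t - 1) * (x ^ t + y ^ t) := by
          push_cast [NNReal.coe_rpow, Real.coe_toNNReal _ hx, Real.coe_toNNReal _ hy]; norm_num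
      _ ≤ max 1 (2 ^ (t - 1)) * (x ^ t + y ^ t) := by
          have : (0:ℝ) ≤ x ^ t + y ^ t := by positivity
          exact mul_le_mul_of_nonneg_right (le_max_right _ _) this

lemma key_sq {p : ℝ} (hp1 : 1 < p) (hp2 : p < 2) (a c : ℝ) :
    (|a + c| ^ (p - 1) * (a + c) - |a| ^ (p - 1) * a) ^ 2 ≤
      max 1 (2 ^ (2 * (p - 1) - 1)) * p ^ 2 * c ^ 2 *
        (|a| ^ (2 * (p - 1)) + |c| ^ (2 * (p - 1)) / (2 * (p - 1) + 1)) := by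
  have hp0 : (0:ℝ) < p - 1 := by linarith
  set p' : ℝ := 2 * (p - 1) with hp'def
  have hp'0 : (0:ℝ) < p' := by positivity
  have hp'1 : (0:ℝ) < p' + 1 := by linarith
  set C2 : ℝ := max 1 (2 ^ (p' - 1)) with hC2def
  set g : ℝ → ℝ := fun s => |a + s * c| ^ (p - 1) with hgdef
  have hgc : Continuous g := by
    exact (continuous_const.add (continuous_id.mul continuous_const)).abs.rpow_const
      (fun _ => Or.inr hp0.le)
  have hcont : Continuous (fun s : ℝ => p * |a + s * c| ^ (p - 1) * c) :=
    (continuous_const.mul hgc).mul continuous_const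
  have hderiv : ∀ s ∈ Set.uIcc (0:ℝ) 1,
      HasDerivAt (fun u : ℝ => |a + u * c| ^ (p - 1) * (a + u * c))
        (p * |a + s * c| ^ (p - 1) * c) s := by
    intro s _
    have hφ : HasDerivAt (fun u : ℝ => a + u * c) c s := by
      simpa using ((hasDerivAt_id s).mul_const c).const_add a
    have := (hasDerivAt_abs_rpow_mul hp1 (a + s * c)).comp s hφ
    simpa [Function.comp_def, mul_assoc] using this
  have hFTC : ∫ s in (0:ℝ)..1, p * |a + s * c| ^ (p - 1) * c
      = |a + c| ^ (p - 1) * (a + c) - |a| ^ (p - 1) * a := by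
    have := intervalIntegral.integral_eq_sub_of_hasDerivAt hderiv
      (hcont.intervalIntegrable 0 1)
    simpa using this
  set I : ℝ := ∫ s in (0:ℝ)..1, g s with hIdef
  have hI : ∫ s in (0:ℝ)..1, p * |a + s * c| ^ (p - 1) * c = (p * c) * I := by
    rw [hIdef, ← intervalIntegral.integral_const_mul]
    apply intervalIntegral.integral_congr
    intro s _; simp [hgdef]; ring
  set J : ℝ := ∫ s in (0:ℝ)..1, |a + s * c| ^ p' with hJdef
  have hI0 : 0 ≤ I := intervalIntegral.integral_nonneg (by norm_num)
    (fun s _ => Real.rpow_nonneg (abs_nonneg _) _)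
  have hJ0 : 0 ≤ J := intervalIntegral.integral_nonneg (by norm_num)
    (fun s _ => Real.rpow_nonneg (abs_nonneg _) _)
  -- Cauchy–Schwarz : I ^ 2 ≤ J
  have hISQ : I ^ 2 ≤ J := by
    set ν := MeasureTheory.volume.restrict (Set.Ioc (0:ℝ) 1) with hνdef
    haveI : MeasureTheory.IsFiniteMeasure ν := by
      constructor
      rw [hνdef, MeasureTheory.Measure.restrict_apply_univ, Real.volume_Ioc]
      norm_num
    have hmem : MeasureTheory.MemLp g (ENNReal.ofReal 2) ν := by
      refine MeasureTheory.MemLp.mono_exponent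
        (MeasureTheory.memLp_top_of_bound hgc.aestronglyMeasurable ((|a| + |c|) ^ (p - 1)) ?_)
        le_top
      filter_upwards [MeasureTheory.self_mem_ae_restrict measurableSet_Ioc] with s hs
      rw [Real.norm_eq_abs, abs_of_nonneg (Real.rpow_nonneg (abs_nonneg _) _)]
      apply Real.rpow_le_rpow (abs_nonneg _) _ hp0.le
      calc |a + s * c| ≤ |a| + |s * c| := abs_add_le _ _
        _ = |a| + s * |c| := by rw [abs_mul, abs_of_pos hs.1]
        _ ≤ |a| + 1 * |c| := by
            have := hs.2
            nlinarith [abs_nonneg c]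
        _ = |a| + |c| := by ring
    have hone : MeasureTheory.MemLp (fun _ : ℝ => (1:ℝ)) (ENNReal.ofReal 2) ν :=
      MeasureTheory.memLp_const 1
    have hconj : Real.HolderConjugate 2 2 := Real.holderConjugate_iff.mpr ⟨one_lt_two, by norm_num⟩
    have hCS := MeasureTheory.integral_mul_le_Lp_mul_Lq_of_nonneg hconj
      (MeasureTheory.ae_of_all _ (fun s => Real.rpow_nonneg (abs_nonneg _) _))
      (MeasureTheory.ae_of_all _ (fun _ => zero_le_one)) hmem hone
    simp only [mul_one, Real.one_rpow] at hCS
    have hν1 : ∫ _ : ℝ, (1:ℝ) ∂ν = 1 := by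
      simp [hνdef, MeasureTheory.integral_const, MeasureTheory.Measure.restrict_apply_univ,
        Real.volume_Ioc]
    rw [hν1, Real.one_rpow, mul_one] at hCS
    have hIeq : I = ∫ s, g s ∂ν := by
      rw [hIdef, intervalIntegral.integral_of_le (by norm_num : (0:ℝ) ≤ 1)]
    have hJeq : J = ∫ s, g s ^ (2:ℝ) ∂ν := by
      rw [hJdef, intervalIntegral.integral_of_le (by norm_num : (0:ℝ) ≤ 1)]
      apply MeasureTheory.integral_congr_ae
      apply MeasureTheory.ae_of_all
      intro s
      show |a + s * c| ^ p' = (|a + s * c| ^ (p - 1)) ^ (2:ℝ)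
      rw [← Real.rpow_mul (abs_nonneg _)]
      congr 1
      rw [hp'def]; ring
    have hJ20 : 0 ≤ ∫ s, g s ^ (2:ℝ) ∂ν :=
      MeasureTheory.integral_nonneg (fun s => Real.rpow_nonneg (Real.rpow_nonneg (abs_nonneg _) _) _)
    calc I ^ 2 ≤ ((∫ s, g s ^ (2:ℝ) ∂ν) ^ ((1:ℝ)/2)) ^ 2 := by
          apply pow_le_pow_left₀ hI0
          rw [hIeq]; exact hCS
      _ = ∫ s, g s ^ (2:ℝ) ∂ν := by
          rw [← Real.rpow_natCast ((∫ s, g s ^ (2:ℝ) ∂ν) ^ ((1:ℝ)/2)) 2,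
            ← Real.rpow_mul hJ20]
          norm_num
      _ = J := hJeq.symm
  -- bound J
  have hJle : J ≤ C2 * (|a| ^ p' + |c| ^ p' / (p' + 1)) := by
    have hint1 : IntervalIntegrable (fun s : ℝ => |a + s * c| ^ p')
        MeasureTheory.volume 0 1 :=
      (((continuous_const.add (continuous_id.mul continuous_const)).abs.rpow_const
        (fun _ => Or.inr hp'0.le))).intervalIntegrable 0 1
    have hint2 : IntervalIntegrable (fun s : ℝ => C2 * (|a| ^ p' + s ^ p' * |c| ^ p'))
        MeasureTheory.volume 0 1 :=
      (continuous_const.mul (continuous_const.add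
        ((continuous_id.rpow_const (fun _ => Or.inr hp'0.le)).mul
          continuous_const))).intervalIntegrable 0 1
    have hpt : ∀ s ∈ Set.Icc (0:ℝ) 1,
        |a + s * c| ^ p' ≤ C2 * (|a| ^ p' + s ^ p' * |c| ^ p') := by
      intro s hs
      have h1 : |a + s * c| ^ p' ≤ (|a| + s * |c|) ^ p' := by
        apply Real.rpow_le_rpow (abs_nonneg _) _ hp'0.le
        calc |a + s * c| ≤ |a| + |s * c| := abs_add_le _ _
          _ = |a| + s * |c| := by rw [abs_mul, abs_of_nonneg hs.1]
      have h2 : (|a| + s * |c|) ^ p' ≤ C2 * (|a| ^ p' + (s * |c|) ^ p') :=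
        rpow_add_le_max hp'0 (abs_nonneg _) (mul_nonneg hs.1 (abs_nonneg _))
      have h3 : (s * |c|) ^ p' = s ^ p' * |c| ^ p' :=
        Real.mul_rpow hs.1 (abs_nonneg _)
      rw [h3] at h2
      exact h1.trans h2
    have hmono := intervalIntegral.integral_mono_on (by norm_num : (0:ℝ) ≤ 1)
      hint1 hint2 hpt
    rw [hJdef]
    refine hmono.trans (le_of_eq ?_)
    rw [intervalIntegral.integral_const_mul]
    congr 1
    have hi2 : IntervalIntegrable (fun s : ℝ => s ^ p' * |c| ^ p') MeasureTheory.volume 0 1 :=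
      ((continuous_id.rpow_const (fun _ => Or.inr hp'0.le)).mul
        continuous_const).intervalIntegrable 0 1
    rw [intervalIntegral.integral_add (intervalIntegrable_const) hi2]
    congr 1
    · simp
    · rw [intervalIntegral.integral_mul_const,
        integral_rpow (Or.inl (by linarith : (-1:ℝ) < p'))]
      rw [Real.one_rpow, Real.zero_rpow (by linarith : p' + 1 ≠ 0)]
      ring
  -- assemble
  have hmain : (|a + c| ^ (p - 1) * (a + c) - |a| ^ (p - 1) * a) = (p * c) * I := by
    rw [← hFTC, hI]
  rw [hmain]
  have : ((p * c) * I) ^ 2 = p ^ 2 * c ^ 2 * I ^ 2 := by ring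
  rw [this]
  calc p ^ 2 * c ^ 2 * I ^ 2 ≤ p ^ 2 * c ^ 2 * J := by
        apply mul_le_mul_of_nonneg_left hISQ (by positivity)
    _ ≤ p ^ 2 * c ^ 2 * (C2 * (|a| ^ p' + |c| ^ p' / (p' + 1))) := by
        apply mul_le_mul_of_nonneg_left hJle (by positivity)
    _ = C2 * p ^ 2 * c ^ 2 * (|a| ^ p' + |c| ^ p' / (p' + 1)) := by ring

lemma key_abs {p : ℝ} (hp1 : 1 < p) (hp2 : p < 2) {ε : ℝ} (hε : 0 < ε) (a w : ℝ) :
    |(|a + ε * w| ^ (p - 1) * (a + ε * w) - |a| ^ (p - 1) * a)| ≤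
      max 1 (2 ^ ((2 * (p - 1) - 1) / 2)) * p * ε *
        (|w| * ((|a| ^ (2 * (p - 1)) +
          ε ^ (2 * (p - 1)) / (2 * (p - 1) + 1) * |w| ^ (2 * (p - 1))) ^ ((1:ℝ)/2))) := by
  have hp0 : (0:ℝ) < p - 1 := by linarith
  set p' : ℝ := 2 * (p - 1) with hp'def
  have hp'0 : (0:ℝ) < p' := by positivity
  set M : ℝ := max 1 (2 ^ ((p' - 1) / 2)) with hMdef
  have hM1 : (1:ℝ) ≤ M := le_max_left _ _
  have hM0 : (0:ℝ) ≤ M := by linarith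
  set H : ℝ := |a| ^ p' + ε ^ p' / (p' + 1) * |w| ^ p' with hHdef
  have hH0 : 0 ≤ H := by
    have := Real.rpow_nonneg (abs_nonneg a) p'
    have := Real.rpow_nonneg (abs_nonneg w) p'
    have := Real.rpow_nonneg hε.le p'
    have : (0:ℝ) < p' + 1 := by linarith
    positivity
  have hC2M : max 1 ((2:ℝ) ^ (p' - 1)) ≤ M ^ 2 := by
    apply max_le
    · nlinarith
    · have hle : (2:ℝ) ^ ((p' - 1) / 2) ≤ M := le_max_right _ _
      have h2 : ((2:ℝ) ^ ((p' - 1) / 2)) ^ 2 = 2 ^ (p' - 1) := by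
        rw [← Real.rpow_natCast ((2:ℝ) ^ ((p' - 1) / 2)) 2,
          ← Real.rpow_mul (by norm_num : (0:ℝ) ≤ 2)]
        norm_num
      calc (2:ℝ) ^ (p' - 1) = ((2:ℝ) ^ ((p' - 1) / 2)) ^ 2 := h2.symm
        _ ≤ M ^ 2 := by
            apply pow_le_pow_left₀ (Real.rpow_nonneg (by norm_num) _) hle
  have hkey := key_sq hp1 hp2 a (ε * w)
  have habs : |ε * w| ^ p' = ε ^ p' * |w| ^ p' := by
    rw [abs_mul, abs_of_pos hε, Real.mul_rpow hε.le (abs_nonneg _)]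
  set D : ℝ := |a + ε * w| ^ (p - 1) * (a + ε * w) - |a| ^ (p - 1) * a with hDdef
  have hsq : D ^ 2 ≤ M ^ 2 * p ^ 2 * ε ^ 2 * w ^ 2 * H := by
    have h1 : D ^ 2 ≤ max 1 ((2:ℝ) ^ (p' - 1)) * p ^ 2 * (ε * w) ^ 2 * H := by
      refine hkey.trans (le_of_eq ?_)
      rw [hHdef, habs]
      ring
    refine h1.trans ?_
    have hA : (0:ℝ) ≤ p ^ 2 * (ε * w) ^ 2 * H := by positivity
    calc max 1 ((2:ℝ) ^ (p' - 1)) * p ^ 2 * (ε * w) ^ 2 * H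
        = max 1 ((2:ℝ) ^ (p' - 1)) * (p ^ 2 * (ε * w) ^ 2 * H) := by ring
      _ ≤ M ^ 2 * (p ^ 2 * (ε * w) ^ 2 * H) := mul_le_mul_of_nonneg_right hC2M hA
      _ = M ^ 2 * p ^ 2 * ε ^ 2 * w ^ 2 * H := by ring
  have hRHS0 : 0 ≤ M * p * ε * (|w| * H ^ ((1:ℝ)/2)) := by
    have h1 : (0:ℝ) ≤ H ^ ((1:ℝ)/2) := Real.rpow_nonneg hH0 _
    have : (0:ℝ) < p := by linarith
    positivity
  have hRHSsq : (M * p * ε * (|w| * H ^ ((1:ℝ)/2))) ^ 2 = M ^ 2 * p ^ 2 * ε ^ 2 * w ^ 2 * H := by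
    have h1 : (H ^ ((1:ℝ)/2)) ^ 2 = H := by
      rw [← Real.rpow_natCast (H ^ ((1:ℝ)/2)) 2, ← Real.rpow_mul hH0]
      norm_num
    have h2 : |w| ^ 2 = w ^ 2 := sq_abs w
    calc (M * p * ε * (|w| * H ^ ((1:ℝ)/2))) ^ 2
        = M ^ 2 * p ^ 2 * ε ^ 2 * |w| ^ 2 * (H ^ ((1:ℝ)/2)) ^ 2 := by ring
      _ = M ^ 2 * p ^ 2 * ε ^ 2 * w ^ 2 * H := by rw [h1, h2]
  calc |D| = Real.sqrt (D ^ 2) := (Real.sqrt_sq_eq_abs D).symm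
    _ ≤ Real.sqrt ((M * p * ε * (|w| * H ^ ((1:ℝ)/2))) ^ 2) := by
        apply Real.sqrt_le_sqrt
        rw [hRHSsq]; exact hsq
    _ = M * p * ε * (|w| * H ^ ((1:ℝ)/2)) := Real.sqrt_sq hRHS0

end aux_stmt_10

/-- `L²` estimate for `|û+εω|^{p-1}(û+εω) − |û|^{p-1}û` in terms of `‖ω‖_{L^q}` and
the `L^{rp'}` norms of `û` and `ω`, where `p' = 2(p−1)`. -/
theorem stmt_10 {Ω : Type*} [MeasurableSpace Ω] (μ : Measure Ω)
    (p p' q r : ℝ) (hp1 : 1 < p) (hp2 : p < 2) (hp' : p' = 2 * (p - 1))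
    (hq : 2 ≤ q) (hr : 1 / (p - 1) ≤ r) (hqr : 2 / q + 1 / r = 1)
    (uhat ω : Ω → ℝ) (huhat : Measurable uhat) (hω : Measurable ω)
    (hωq : MemLp ω (ENNReal.ofReal q) μ)
    (hωrp : MemLp ω (ENNReal.ofReal (r * p')) μ)
    (huhatrp : MemLp uhat (ENNReal.ofReal (r * p')) μ)
    (ε : ℝ) (hε : 0 < ε) :
    eLpNorm (fun x => |uhat x + ε * ω x| ^ (p - 1) * (uhat x + ε * ω x) -
        |uhat x| ^ (p - 1) * uhat x) 2 μ ≤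
      ENNReal.ofReal (max 1 (2 ^ ((p' - 1) / 2)) * p * ε *
        (eLpNorm ω (ENNReal.ofReal q) μ).toReal *
        ((eLpNorm uhat (ENNReal.ofReal (r * p')) μ).toReal ^ p' +
          ε ^ p' / (p' + 1) * (eLpNorm ω (ENNReal.ofReal (r * p')) μ).toReal ^ p')
          ^ ((1:ℝ) / 2)) := by
  have hp0 : (0:ℝ) < p - 1 := by linarith
  have hp'0 : (0:ℝ) < p' := by rw [hp']; linarith
  have hq0 : (0:ℝ) < q := by linarith
  have hr1 : (1:ℝ) < r := by
    have h1 : (1:ℝ) < 1 / (p - 1) := by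
      rw [lt_div_iff₀ hp0]; nlinarith
    linarith
  have hr0 : (0:ℝ) < r := by linarith
  have hp_pos : (0:ℝ) < p := by linarith
  set M : ℝ := max 1 (2 ^ ((p' - 1) / 2)) with hMdef
  have hM1 : (1:ℝ) ≤ M := le_max_left _ _
  set h : Ω → ℝ := fun x => |uhat x| ^ p' + ε ^ p' / (p' + 1) * |ω x| ^ p' with hhdef
  have hh0 : ∀ x, 0 ≤ h x := fun x => by
    have h1 : (0:ℝ) ≤ |uhat x| ^ p' := Real.rpow_nonneg (abs_nonneg _) _
    have h2 : (0:ℝ) ≤ |ω x| ^ p' := Real.rpow_nonneg (abs_nonneg _) _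
    have h3 : (0:ℝ) ≤ ε ^ p' := Real.rpow_nonneg hε.le _
    have h4 : (0:ℝ) < p' + 1 := by linarith
    positivity
  have hωabsm : Measurable fun x => |ω x| := continuous_abs.measurable.comp hω
  have huabsm : Measurable fun x => |uhat x| := continuous_abs.measurable.comp huhat
  have hhm : Measurable h := by
    have h1 : Measurable fun x => |uhat x| ^ p' :=
      (Real.continuous_rpow_const hp'0.le).measurable.comp huabsm
    have h2 : Measurable fun x => |ω x| ^ p' :=
      (Real.continuous_rpow_const hp'0.le).measurable.comp hωabsm
    exact h1.add (h2.const_mul _)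
  have hsm : Measurable fun x => (h x) ^ ((1:ℝ)/2) :=
    (Real.continuous_rpow_const (by norm_num)).measurable.comp hhm
  -- Step A : pointwise bound
  have hstepA : eLpNorm (fun x => |uhat x + ε * ω x| ^ (p - 1) * (uhat x + ε * ω x) -
        |uhat x| ^ (p - 1) * uhat x) 2 μ
      ≤ eLpNorm (fun x => M * p * ε * (|ω x| * (h x) ^ ((1:ℝ)/2))) 2 μ := by
    apply eLpNorm_mono_real
    intro x
    rw [Real.norm_eq_abs]
    have hk := key_abs hp1 hp2 hε (uhat x) (ω x)
    rw [← hp'] at hk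
    exact hk
  -- Step B : pull out the constant
  have hconst0 : (0:ℝ) ≤ M * p * ε := by positivity
  have hstepB : eLpNorm (fun x => M * p * ε * (|ω x| * (h x) ^ ((1:ℝ)/2))) 2 μ
      = ENNReal.ofReal (M * p * ε) * eLpNorm (fun x => |ω x| * (h x) ^ ((1:ℝ)/2)) 2 μ := by
    have heq : (fun x => M * p * ε * (|ω x| * (h x) ^ ((1:ℝ)/2)))
        = (M * p * ε) • fun x => |ω x| * (h x) ^ ((1:ℝ)/2) := rfl
    rw [heq, eLpNorm_const_smul]
    congr 1
    exact Real.enorm_eq_ofReal hconst0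
  -- Step C : Hölder
  have hexp : (1:ℝ≥0∞)/2 = 1/ENNReal.ofReal q + 1/ENNReal.ofReal (2*r) := by
    have hreal : (1:ℝ)/2 = 1/q + 1/(2*r) := by
      field_simp at hqr ⊢
      linarith
    rw [show ((2:ℝ≥0∞)) = ENNReal.ofReal 2 from by simp,
      ← ENNReal.ofReal_one,
      ← ENNReal.ofReal_div_of_pos (by norm_num : (0:ℝ) < 2),
      ← ENNReal.ofReal_div_of_pos hq0,
      ← ENNReal.ofReal_div_of_pos (by positivity : (0:ℝ) < 2*r),
      ← ENNReal.ofReal_add (by positivity) (by positivity)]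
    exact congrArg ENNReal.ofReal hreal
  have hstepC : eLpNorm (fun x => |ω x| * (h x) ^ ((1:ℝ)/2)) 2 μ
      ≤ eLpNorm ω (ENNReal.ofReal q) μ *
        eLpNorm (fun x => (h x) ^ ((1:ℝ)/2)) (ENNReal.ofReal (2*r)) μ := by
    haveI : ENNReal.HolderTriple (ENNReal.ofReal q) (ENNReal.ofReal (2*r)) 2 :=
      ⟨by simpa only [one_div] using hexp.symm⟩
    have hH := eLpNorm_le_eLpNorm_mul_eLpNorm'_of_norm (μ := μ) (p := ENNReal.ofReal q)
      (q := ENNReal.ofReal (2*r)) (r := 2)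
      (f := fun x => |ω x|) (g := fun x => (h x) ^ ((1:ℝ)/2))
      hωabsm.aestronglyMeasurable hsm.aestronglyMeasurable (fun u v => u * v) 1
      (Filter.Eventually.of_forall fun x => le_of_eq (by rw [NNReal.coe_one, one_mul, norm_mul]))
    have hωabs : (fun x : Ω => |ω x|) = fun x => ‖ω x‖ := by
      funext x; rw [Real.norm_eq_abs]
    rwa [hωabs, eLpNorm_norm, ENNReal.coe_one, one_mul] at hH
  -- Step D : sqrt of the norm
  have hstepD : eLpNorm (fun x => (h x) ^ ((1:ℝ)/2)) (ENNReal.ofReal (2*r)) μ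
      = (eLpNorm h (ENNReal.ofReal r) μ) ^ ((1:ℝ)/2) := by
    have h1 : (fun x => (h x) ^ ((1:ℝ)/2)) = fun x => ‖h x‖ ^ ((1:ℝ)/2) := by
      funext x; rw [Real.norm_eq_abs, abs_of_nonneg (hh0 x)]
    rw [h1, eLpNorm_norm_rpow h (by norm_num : (0:ℝ) < 1/2)]
    congr 2
    rw [← ENNReal.ofReal_mul (by positivity : (0:ℝ) ≤ 2*r)]
    congr 1
    ring
  -- Step E : triangle inequality and rpow norms
  set A := eLpNorm ω (ENNReal.ofReal q) μ with hAdef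
  set B := eLpNorm uhat (ENNReal.ofReal (r * p')) μ with hBdef
  set W := eLpNorm ω (ENNReal.ofReal (r * p')) μ with hWdef
  have hBrpow : eLpNorm (fun x => |uhat x| ^ p') (ENNReal.ofReal r) μ = B ^ p' := by
    have h1 : (fun x => |uhat x| ^ p') = fun x => ‖uhat x‖ ^ p' := by
      funext x; rw [Real.norm_eq_abs]
    rw [h1, eLpNorm_norm_rpow uhat hp'0, hBdef, ← ENNReal.ofReal_mul hr0.le]
  have hWrpow : eLpNorm (fun x => |ω x| ^ p') (ENNReal.ofReal r) μ = W ^ p' := by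
    have h1 : (fun x => |ω x| ^ p') = fun x => ‖ω x‖ ^ p' := by
      funext x; rw [Real.norm_eq_abs]
    rw [h1, eLpNorm_norm_rpow ω hp'0, hWdef, ← ENNReal.ofReal_mul hr0.le]
  have hcd0 : (0:ℝ) ≤ ε ^ p' / (p' + 1) := by
    have h3 : (0:ℝ) ≤ ε ^ p' := Real.rpow_nonneg hε.le _
    have h4 : (0:ℝ) < p' + 1 := by linarith
    positivity
  have hstepE : eLpNorm h (ENNReal.ofReal r) μ
      ≤ B ^ p' + ENNReal.ofReal (ε ^ p' / (p' + 1)) * W ^ p' := by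
    have hf1 : Measurable fun x => |uhat x| ^ p' :=
      (Real.continuous_rpow_const hp'0.le).measurable.comp huabsm
    have hf2 : Measurable fun x => ε ^ p' / (p' + 1) * |ω x| ^ p' :=
      ((Real.continuous_rpow_const hp'0.le).measurable.comp hωabsm).const_mul _
    have heq : h = (fun x => |uhat x| ^ p') + fun x => ε ^ p' / (p' + 1) * |ω x| ^ p' := rfl
    have htri := MeasureTheory.eLpNorm_add_le (μ := μ) (p := ENNReal.ofReal r)
      hf1.aestronglyMeasurable hf2.aestronglyMeasurable
      (ENNReal.one_le_ofReal.mpr hr1.le)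
    rw [heq]
    refine htri.trans ?_
    rw [hBrpow]
    gcongr
    have heq2 : (fun x => ε ^ p' / (p' + 1) * |ω x| ^ p')
        = (ε ^ p' / (p' + 1)) • fun x => |ω x| ^ p' := rfl
    rw [heq2, eLpNorm_const_smul, hWrpow]
    gcongr
    exact le_of_eq (Real.enorm_eq_ofReal hcd0)
  -- chain
  have hchain : eLpNorm (fun x => |uhat x + ε * ω x| ^ (p - 1) * (uhat x + ε * ω x) -
        |uhat x| ^ (p - 1) * uhat x) 2 μ
      ≤ ENNReal.ofReal (M * p * ε) *
        (A * (B ^ p' + ENNReal.ofReal (ε ^ p' / (p' + 1)) * W ^ p') ^ ((1:ℝ)/2)) := by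
    refine hstepA.trans ?_
    rw [hstepB]
    refine mul_le_mul' le_rfl ?_
    refine hstepC.trans ?_
    rw [hstepD]
    exact mul_le_mul' le_rfl (ENNReal.rpow_le_rpow hstepE (by norm_num))
  refine hchain.trans (le_of_eq ?_)
  -- convert to real form
  have hAeq : A = ENNReal.ofReal A.toReal := (ENNReal.ofReal_toReal hωq.2.ne).symm
  have hBeq : B = ENNReal.ofReal B.toReal := (ENNReal.ofReal_toReal huhatrp.2.ne).symm
  have hWeq : W = ENNReal.ofReal W.toReal := (ENNReal.ofReal_toReal hωrp.2.ne).symm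
  have hBr0 : (0:ℝ) ≤ B.toReal ^ p' := Real.rpow_nonneg ENNReal.toReal_nonneg _
  have hWr0 : (0:ℝ) ≤ W.toReal ^ p' := Real.rpow_nonneg ENNReal.toReal_nonneg _
  conv_lhs => rw [hAeq, hBeq, hWeq]
  rw [ENNReal.ofReal_rpow_of_nonneg ENNReal.toReal_nonneg hp'0.le,
    ENNReal.ofReal_rpow_of_nonneg ENNReal.toReal_nonneg hp'0.le,
    ← ENNReal.ofReal_mul hcd0,
    ← ENNReal.ofReal_add hBr0 (mul_nonneg hcd0 hWr0),
    ENNReal.ofReal_rpow_of_nonneg (by positivity) (by norm_num : (0:ℝ) ≤ 1/2),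
    ← ENNReal.ofReal_mul ENNReal.toReal_nonneg,
    ← ENNReal.ofReal_mul hconst0]
  exact congrArg ENNReal.ofReal (by ring)
end
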